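/- For every finitely supported real sequence Φ and every k ∈ ℕ: ∂F/∂φ_k(Φ) = F(Φ + (π/4)·e_k) − F(Φ − (π/4)·e_k); equivalently, for all x ∈ [−1,1], ∂g(x,Φ)/∂φ_k = g(x, Φ + (π/4)·e_k) − g(x, Φ − (π/4)·e_k). -/

import Mathlib

open scoped Real
noncomputable section

/-- The QSP signal matrix `W(x)`: diagonal entries `x`, off-diagonal entries `i√(1-x²)`. -/
def Wmat (x : ℝ) : Matrix (Fin 2) (Fin 2) ℂ :=
  !![(x : ℂ), Complex.I * (Real.sqrt (1 - x ^ 2) : ℂ);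
     Complex.I * (Real.sqrt (1 - x ^ 2) : ℂ), (x : ℂ)]

/-- `exp(i ψ Z)` where `Z = diag(1, -1)`. -/
def expZ (ψ : ℝ) : Matrix (Fin 2) (Fin 2) ℂ :=
  !![Complex.exp (Complex.I * (ψ : ℂ)), 0; 0, Complex.exp (-(Complex.I * (ψ : ℂ)))]

/-- The QSP unitary `U(x, Ψ) = e^{iψ₀Z} ∏_{j=1}^{d} (W(x) e^{iψ_j Z})`,
with phase factors `ψ₀, …, ψ_d` given as the first `d+1` entries of `Ψ : ℕ → ℝ`. -/
def Umat (x : ℝ) (d : ℕ) (Ψ : ℕ → ℝ) : Matrix (Fin 2) (Fin 2) ℂ :=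
  expZ (Ψ 0) * (((List.range d).map fun j => Wmat x * expZ (Ψ (j + 1))).prod)

/-- `g(x, Ψ) = Im ⟨0|U(x,Ψ)|0⟩`. -/
def gfun (x : ℝ) (d : ℕ) (Ψ : ℕ → ℝ) : ℝ := (Umat x d Ψ 0 0).im

/-- The partial derivative `∂g(x,Ψ)/∂ψ_k`. -/
def gfunPD (x : ℝ) (d k : ℕ) (Ψ : ℕ → ℝ) : ℝ :=
  deriv (fun t => gfun x d (Function.update Ψ k t)) (Ψ k)

/-- The second partial derivative `∂²g(x,Ψ)/∂ψ_r∂ψ_s`. -/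
def gfunPD2 (x : ℝ) (d r s : ℕ) (Ψ : ℕ → ℝ) : ℝ :=
  deriv (fun t => gfunPD x d s (Function.update Ψ r t)) (Ψ r)

/-- The full symmetric phase-factor sequence
`Ψ(Φ, n) = (φ_{n-1}, …, φ₁, 2φ₀, φ₁, …, φ_{n-1})` of length `2n-1`
associated with even-parity reduced phase factors `Φ`. -/
def pad (Φ : ℕ →₀ ℝ) (n : ℕ) : ℕ → ℝ := fun j =>
  if j + 1 < n then Φ (n - 1 - j) else if j + 1 = n then 2 * Φ 0 else Φ (j + 1 - n)

/-- One plus the largest element of the support of `Φ`; thus `Φ k = 0` for all `k ≥ nOf Φ`. -/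
def nOf (Φ : ℕ →₀ ℝ) : ℕ := Φ.support.sup id + 1

/-- `g(x, Φ)` for even-parity reduced phase factors `Φ` (independent of the padding length). -/
def gred (x : ℝ) (Φ : ℕ →₀ ℝ) : ℝ := gfun x (2 * nOf Φ - 2) (pad Φ (nOf Φ))

/-- The `j`-th coefficient in the even Chebyshev expansion `f = ∑_j c_j T_{2j}` on `[-1,1]`,
defined via the Fourier-type integral formula, which recovers the coefficients whenever
`f` restricted to `[-1,1]` is such a finite combination. -/
def chebCoeff (f : ℝ → ℝ) (j : ℕ) : ℝ :=
  (if j = 0 then 1 / (2 * π) else 1 / π) *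
    ∫ θ in (0:ℝ)..(2 * π), f (Real.cos θ) * Real.cos (2 * j * θ)

/-- `F(Φ)`: the Chebyshev-coefficient sequence of `g(·, Φ)`, so that
`g(x,Φ) = ∑_j (F Φ)_j T_{2j}(x)` on `[-1,1]`. -/
def Fmap (Φ : ℕ →₀ ℝ) (j : ℕ) : ℝ := chebCoeff (fun x => gred x Φ) j

/-- The ℓ¹ norm of a finitely supported sequence. -/
def l1 (Φ : ℕ →₀ ℝ) : ℝ := ∑ k ∈ Φ.support, |Φ k|

/-- Partial derivative `∂g(x,Φ)/∂φ_k`. -/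
def gredPD (k : ℕ) (x : ℝ) (Φ : ℕ →₀ ℝ) : ℝ :=
  deriv (fun t => gred x (Φ.update k t)) (Φ k)

/-- Partial derivative `∂F/∂φ_k (Φ)` (the `k`-th column of the Jacobian `DF(Φ)`). -/
def FmapPD (k : ℕ) (Φ : ℕ →₀ ℝ) (j : ℕ) : ℝ :=
  deriv (fun t => Fmap (Φ.update k t) j) (Φ k)

/-- Second partial derivative `∂²F/∂φ_r∂φ_s (Φ)`. -/
def FmapPD2 (r s : ℕ) (Φ : ℕ →₀ ℝ) (j : ℕ) : ℝ :=
  deriv (fun t => FmapPD s (Φ.update r t) j) (Φ r)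

/-- `h(x) = 2cosh(2x) - 2`. -/
def hfun (x : ℝ) : ℝ := 2 * Real.cosh (2 * x) - 2

/-- `H(x) = 4x - sinh(2x)`. -/
def Hfun (x : ℝ) : ℝ := 4 * x - Real.sinh (2 * x)

/-- `r_Φ = arccosh(2)/2 = log(2+√3)/2 ≈ 0.658`, the unique positive solution of `h(r) = 2`. -/
def rPhi : ℝ := Real.log (2 + Real.sqrt 3) / 2

/-- `r_c = H(r_Φ) ≈ 0.902`. -/
def rc : ℝ := Hfun rPhi

/-- The inverse `H⁻¹` of `H` on `[0, r_c]` (the preimage taken in `[0, r_Φ]`). -/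
def Hinv (y : ℝ) : ℝ := Function.invFunOn Hfun (Set.Icc 0 rPhi) y

/-- `r̃_Φ = arcsinh(arccosh 2)/2 ≈ 0.544`. -/
def rPhiT : ℝ := Real.arsinh (Real.log (2 + Real.sqrt 3)) / 2

/-- `r̃_c = H(r̃_Φ) ≈ 0.861`. -/
def rcT : ℝ := Hfun rPhiT

/-- `γ(r) = (1/2)∫₀¹ h(r + s((1/2)sinh(2r) - r)) ds`. -/
def gam (r : ℝ) : ℝ := (1 / 2) * ∫ s in (0:ℝ)..1, hfun (r + s * (Real.sinh (2 * r) / 2 - r))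

/-- The real sequence space ℓ¹. -/
abbrev ell1 : Type := lp (fun _ : ℕ => ℝ) 1

theorem finsupp_memℓp (Φ : ℕ →₀ ℝ) : Memℓp (fun k => (Φ k : ℝ)) 1 := by
  apply memℓp_gen
  apply summable_of_ne_finset_zero (s := Φ.support)
  intro i hi
  simp [Finsupp.notMem_support_iff.mp hi]

/-- A finitely supported sequence as an element of ℓ¹. -/
def toL1 (Φ : ℕ →₀ ℝ) : ell1 := ⟨fun k => Φ k, finsupp_memℓp Φ⟩


/-! ### Auxiliary machinery for `DF_column_formula` -/

section AuxDF

/-- Structure shared by all factors of the QSP unitary: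
`M 1 1 = conj (M 0 0)` and `M 1 0 = -conj (M 0 1)`. -/
def SU2L (M : Matrix (Fin 2) (Fin 2) ℂ) : Prop :=
  M 1 1 = starRingEnd ℂ (M 0 0) ∧ M 1 0 = -starRingEnd ℂ (M 0 1)

lemma SU2L_one : SU2L 1 := by
  constructor <;> simp [Matrix.one_apply]

lemma SU2L_mul {M N} (hM : SU2L M) (hN : SU2L N) : SU2L (M * N) := by
  obtain ⟨hM1, hM2⟩ := hM; obtain ⟨hN1, hN2⟩ := hN
  constructor <;>
  · simp only [Matrix.mul_apply, Fin.sum_univ_two, map_add, map_mul, hM1, hM2, hN1, hN2]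
    simp only [map_neg, Complex.conj_conj]
    ring

lemma SU2L_W (x : ℝ) : SU2L (Wmat x) := by
  constructor <;> simp [Wmat, Complex.ext_iff]

lemma SU2L_expZ (ψ : ℝ) : SU2L (expZ ψ) := by
  constructor <;> simp [expZ, ← Complex.exp_conj, map_mul, Complex.conj_I]

lemma SU2L_Umat (x : ℝ) (d : ℕ) (Ψ : ℕ → ℝ) : SU2L (Umat x d Ψ) := by
  apply SU2L_mul (SU2L_expZ _)
  induction d with
  | zero => simpa using SU2L_one
  | succ n ih =>
      rw [List.range_succ, List.map_append, List.prod_append]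
      exact SU2L_mul ih (by simpa using SU2L_mul (SU2L_W x) (SU2L_expZ _))

lemma expZ_zero : expZ 0 = 1 := by
  simp [expZ, Matrix.one_fin_two]

lemma pad_shift (Φ : ℕ →₀ ℝ) (n j : ℕ) : pad Φ (n + 1) (j + 1) = pad Φ n j := by
  unfold pad
  split_ifs with h1 h2 h3 h4 h5 <;> first
    | rfl
    | (congr 1; omega)
    | omega

lemma Umat_pad_succ (x : ℝ) (Φ : ℕ →₀ ℝ) (n : ℕ) (hn : 1 ≤ n) (h : Φ n = 0) :
    Umat x (2 * (n + 1) - 2) (pad Φ (n + 1)) =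
      Wmat x * Umat x (2 * n - 2) (pad Φ n) * Wmat x := by
  obtain ⟨m, rfl⟩ : ∃ m, n = m + 1 := ⟨n - 1, by omega⟩
  have hd : 2 * (m + 1 + 1) - 2 = (2 * m + 1) + 1 := by omega
  have hd2 : 2 * (m + 1) - 2 = 2 * m := by omega
  rw [hd, hd2]
  unfold Umat
  have h0 : pad Φ (m + 1 + 1) 0 = 0 := by
    unfold pad
    simp only [zero_add]
    rw [if_pos (by omega)]
    have : m + 1 + 1 - 1 - 0 = m + 1 := by omega
    rw [this, h]
  have hlast : pad Φ (m + 1) (2 * m + 1) = 0 := by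
    unfold pad
    rw [if_neg (by omega), if_neg (by omega)]
    have : 2 * m + 1 + 1 - (m + 1) = m + 1 := by omega
    rw [this, h]
  have hmap : ∀ j, Wmat x * expZ (pad Φ (m + 1 + 1) (j + 1)) =
      Wmat x * expZ (pad Φ (m + 1) j) := by
    intro j; rw [pad_shift]
  rw [h0, expZ_zero, one_mul]
  rw [List.range_succ, List.map_append, List.prod_append]
  rw [List.range_succ_eq_map, List.map_cons, List.prod_cons, List.map_map]
  simp only [hmap]
  have : ((List.range (2 * m)).map
        ((fun j => Wmat x * expZ (pad Φ (m + 1) j)) ∘ Nat.succ)).prod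
      = ((List.range (2 * m)).map (fun j => Wmat x * expZ (pad Φ (m + 1) (j + 1)))).prod := by
    congr 1
  rw [this]
  simp only [List.map_cons, List.prod_cons, List.map_nil, List.prod_nil, hlast, expZ_zero,
    mul_one]
  rw [mul_assoc (Wmat x) (expZ (pad Φ (m + 1) 0))]

lemma WUW_im (x : ℝ) (hx : x ∈ Set.Icc (-1 : ℝ) 1) (U : Matrix (Fin 2) (Fin 2) ℂ)
    (hU : SU2L U) : ((Wmat x * U * Wmat x) 0 0).im = (U 0 0).im := by
  obtain ⟨h1, h2⟩ := hU
  have hs : Real.sqrt (1 - x ^ 2) ^ 2 = 1 - x ^ 2 :=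
    Real.sq_sqrt (by nlinarith [hx.1, hx.2])
  simp [Matrix.mul_apply, Matrix.vecMul, dotProduct, Fin.sum_univ_two, Wmat, h1, h2,
    Complex.add_im, Complex.mul_im, Complex.mul_re, Complex.add_re]
  linear_combination (U 0 0).im * hs

lemma nOf_spec (Φ : ℕ →₀ ℝ) {i : ℕ} (hi : nOf Φ ≤ i) : Φ i = 0 := by
  by_contra h
  have : i ∈ Φ.support := Finsupp.mem_support_iff.mpr h
  have := Finset.le_sup (f := id) this
  simp only [id] at this
  unfold nOf at hi
  omega

lemma one_le_nOf (Φ : ℕ →₀ ℝ) : 1 ≤ nOf Φ := Nat.le_add_left 1 _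

lemma nOf_le (Φ : ℕ →₀ ℝ) {n : ℕ} (h1 : 1 ≤ n) (h : ∀ i, n ≤ i → Φ i = 0) : nOf Φ ≤ n := by
  unfold nOf
  have : Φ.support.sup id ≤ n - 1 := by
    apply Finset.sup_le
    intro i hi
    simp only [id]
    by_contra hc
    exact (Finsupp.mem_support_iff.mp hi) (h i (by omega))
  omega

lemma update_eq_add_single (Φ : ℕ →₀ ℝ) (k : ℕ) (c : ℝ) :
    Φ + Finsupp.single k c = Φ.update k (Φ k + c) := by
  ext i
  rcases eq_or_ne i k with rfl | h
  · simp [Finsupp.update]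
  · simp [Finsupp.update, Finsupp.single_apply, h.symm]
    simp [Function.update_apply, h]

lemma sub_eq_update (Φ : ℕ →₀ ℝ) (k : ℕ) (c : ℝ) :
    Φ - Finsupp.single k c = Φ.update k (Φ k - c) := by
  ext i
  rcases eq_or_ne i k with rfl | h
  · simp [Finsupp.update]
  · simp [Finsupp.update, Finsupp.single_apply, h.symm]
    simp [Function.update_apply, h]

lemma finsuppUpdate_apply (Φ : ℕ →₀ ℝ) (k : ℕ) (t : ℝ) (i : ℕ) :
    Φ.update k t i = if i = k then t else Φ i := by
  rcases eq_or_ne i k with rfl | h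
  · simp [Finsupp.update]
  · simp [Finsupp.update, Function.update_of_ne h, h]

lemma nOf_update_le (Φ : ℕ →₀ ℝ) (k : ℕ) (t : ℝ) :
    nOf (Φ.update k t) ≤ max (nOf Φ) (k + 1) := by
  apply nOf_le _ (by have := one_le_nOf Φ; omega)
  intro i hi
  rw [finsuppUpdate_apply, if_neg (by omega)]
  exact nOf_spec Φ (by omega)

lemma gred_eq (x : ℝ) (hx : x ∈ Set.Icc (-1 : ℝ) 1) (Φ : ℕ →₀ ℝ) {n : ℕ}
    (hn : nOf Φ ≤ n) : gred x Φ = gfun x (2 * n - 2) (pad Φ n) := by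
  induction n, hn using Nat.le_induction with
  | base => rfl
  | succ n hn ih =>
      rw [ih]
      unfold gfun
      rw [Umat_pad_succ x Φ n (le_trans (one_le_nOf Φ) hn) (nOf_spec Φ hn),
        WUW_im x hx _ (SU2L_Umat x _ _)]

lemma prod_range_split {M : Type*} [Monoid M] (f : ℕ → M) (a b : ℕ) :
    ((List.range (a + 1 + b)).map f).prod =
      ((List.range a).map f).prod * f a *
        ((List.range b).map (fun i => f (a + 1 + i))).prod := by
  rw [List.range_add, List.map_append, List.prod_append, List.range_succ, List.map_append,
    List.prod_append, List.map_map]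
  simp [Function.comp_def, mul_assoc]

lemma Umat_two_slot (x : ℝ) (d j1 j2 : ℕ) (Ψ : ℕ → ℝ) (h1 : 1 ≤ j1) (h12 : j1 < j2)
    (h2 : j2 ≤ d) :
    ∃ A B C : Matrix (Fin 2) (Fin 2) ℂ, ∀ t : ℝ,
      Umat x d (Function.update (Function.update Ψ j1 t) j2 t) =
        A * expZ t * B * expZ t * C := by
  set a := j1 - 1 with ha
  set m := j2 - j1 - 1 with hm
  set r := d - j2 with hr
  set g : ℕ → Matrix (Fin 2) (Fin 2) ℂ := fun j => Wmat x * expZ (Ψ (j + 1)) with hg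
  refine ⟨expZ (Ψ 0) * ((List.range a).map g).prod * Wmat x,
    ((List.range m).map (fun i => g (a + 1 + i))).prod * Wmat x,
    ((List.range r).map (fun i => g (a + 1 + (m + 1 + i)))).prod, ?_⟩
  intro t
  set Ψt := Function.update (Function.update Ψ j1 t) j2 t with hΨt
  have hd : d = a + 1 + (m + 1 + r) := by omega
  set f : ℕ → Matrix (Fin 2) (Fin 2) ℂ := fun j => Wmat x * expZ (Ψt (j + 1)) with hf
  have key : ((List.range d).map f).prod =
      ((List.range a).map f).prod * f a *
        (((List.range m).map (fun i => f (a + 1 + i))).prod * f (a + 1 + m) *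
          ((List.range r).map (fun i => f (a + 1 + (m + 1 + i)))).prod) := by
    rw [hd, prod_range_split, prod_range_split (fun i => f (a + 1 + i)) m r]
  have hΨt_other : ∀ j, j ≠ j1 → j ≠ j2 → Ψt j = Ψ j := by
    intro j hj1 hj2
    rw [hΨt, Function.update_apply, if_neg hj2, Function.update_apply, if_neg hj1]
  have hfg : ∀ j, j + 1 ≠ j1 → j + 1 ≠ j2 → f j = g j := by
    intro j hj1 hj2
    rw [hf, hg]
    simp only [hΨt_other _ hj1 hj2]
  have hfa : f a = Wmat x * expZ t := by
    rw [hf]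
    have : Ψt (a + 1) = t := by
      have : a + 1 = j1 := by omega
      rw [this, hΨt, Function.update_apply, if_neg (by omega), Function.update_self]
    simp only [this]
  have hfb : f (a + 1 + m) = Wmat x * expZ t := by
    rw [hf]
    have : Ψt (a + 1 + m + 1) = t := by
      have : a + 1 + m + 1 = j2 := by omega
      rw [this, hΨt, Function.update_self]
    simp only [this]
  have h0 : Ψt 0 = Ψ 0 := hΨt_other 0 (by omega) (by omega)
  have l1 : (List.range a).map f = (List.range a).map g := by
    apply List.map_congr_left
    intro i hi
    exact hfg i (by have := List.mem_range.mp hi; omega)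
      (by have := List.mem_range.mp hi; omega)
  have l2 : (List.range m).map (fun i => f (a + 1 + i)) =
      (List.range m).map (fun i => g (a + 1 + i)) := by
    apply List.map_congr_left
    intro i hi
    exact hfg _ (by have := List.mem_range.mp hi; omega)
      (by have := List.mem_range.mp hi; omega)
  have l3 : (List.range r).map (fun i => f (a + 1 + (m + 1 + i))) =
      (List.range r).map (fun i => g (a + 1 + (m + 1 + i))) := by
    apply List.map_congr_left
    intro i hi
    exact hfg _ (by have := List.mem_range.mp hi; omega)
      (by have := List.mem_range.mp hi; omega)
  show expZ (Ψt 0) * ((List.range d).map f).prod = _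
  rw [h0, key, l1, l2, l3, hfa, hfb]
  simp only [mul_assoc]

lemma Umat_one_slot (x : ℝ) (d j0 : ℕ) (Ψ : ℕ → ℝ) (h1 : 1 ≤ j0) (h2 : j0 ≤ d) :
    ∃ A C : Matrix (Fin 2) (Fin 2) ℂ, ∀ t : ℝ,
      Umat x d (Function.update Ψ j0 (2 * t)) = A * expZ (2 * t) * C := by
  set a := j0 - 1 with ha
  set r := d - j0 with hr
  set g : ℕ → Matrix (Fin 2) (Fin 2) ℂ := fun j => Wmat x * expZ (Ψ (j + 1)) with hg
  refine ⟨expZ (Ψ 0) * ((List.range a).map g).prod * Wmat x,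
    ((List.range r).map (fun i => g (a + 1 + i))).prod, ?_⟩
  intro t
  set Ψt := Function.update Ψ j0 (2 * t) with hΨt
  have hd : d = a + 1 + r := by omega
  set f : ℕ → Matrix (Fin 2) (Fin 2) ℂ := fun j => Wmat x * expZ (Ψt (j + 1)) with hf
  have key : ((List.range d).map f).prod =
      ((List.range a).map f).prod * f a *
        ((List.range r).map (fun i => f (a + 1 + i))).prod := by
    rw [hd, prod_range_split]
  have hΨt_other : ∀ j, j ≠ j0 → Ψt j = Ψ j := by
    intro j hj
    rw [hΨt, Function.update_apply, if_neg hj]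
  have hfg : ∀ j, j + 1 ≠ j0 → f j = g j := by
    intro j hj
    rw [hf, hg]; simp only [hΨt_other _ hj]
  have hfa : f a = Wmat x * expZ (2 * t) := by
    rw [hf]
    have : Ψt (a + 1) = 2 * t := by
      have : a + 1 = j0 := by omega
      rw [this, hΨt, Function.update_self]
    simp only [this]
  have h0 : Ψt 0 = Ψ 0 := hΨt_other 0 (by omega)
  have l1 : (List.range a).map f = (List.range a).map g :=
    List.map_congr_left fun i hi => hfg i (by have := List.mem_range.mp hi; omega)
  have l2 : (List.range r).map (fun i => f (a + 1 + i)) =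
      (List.range r).map (fun i => g (a + 1 + i)) :=
    List.map_congr_left fun i hi => hfg _ (by have := List.mem_range.mp hi; omega)
  show expZ (Ψt 0) * ((List.range d).map f).prod = _
  rw [h0, key, l1, l2, hfa]
  simp only [mul_assoc]

lemma entry_form (A B C : Matrix (Fin 2) (Fin 2) ℂ) (t : ℝ) :
    (A * expZ t * B * expZ t * C) 0 0 =
      (A 0 0 * B 0 0 * C 0 0) * Complex.exp (2 * t * Complex.I) +
      (A 0 1 * B 1 1 * C 1 0) * Complex.exp (-(2 * t * Complex.I)) +
      (A 0 0 * B 0 1 * C 1 0 + A 0 1 * B 1 0 * C 0 0) := by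
  have e1 : Complex.exp (2 * (t : ℂ) * Complex.I) =
      Complex.exp (Complex.I * t) * Complex.exp (Complex.I * t) := by
    rw [← Complex.exp_add]; ring_nf
  have e2 : Complex.exp (-(2 * (t : ℂ) * Complex.I)) =
      Complex.exp (-(Complex.I * t)) * Complex.exp (-(Complex.I * t)) := by
    rw [← Complex.exp_add]; ring_nf
  have e3 : Complex.exp (Complex.I * t) * Complex.exp (-(Complex.I * t)) = 1 := by
    rw [← Complex.exp_add]; simp
  simp [Matrix.mul_apply, Fin.sum_univ_two, expZ]
  rw [e1, e2]
  linear_combination (A 0 0 * B 0 1 * C 1 0 + A 0 1 * B 1 0 * C 0 0) * e3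

lemma entry_form1 (A C : Matrix (Fin 2) (Fin 2) ℂ) (t : ℝ) :
    (A * expZ (2 * t) * C) 0 0 =
      (A 0 0 * C 0 0) * Complex.exp (2 * t * Complex.I) +
      (A 0 1 * C 1 0) * Complex.exp (-(2 * t * Complex.I)) + 0 := by
  have e1 : Complex.exp (Complex.I * ((2 * t : ℝ) : ℂ)) = Complex.exp (2 * t * Complex.I) := by
    congr 1; push_cast; ring
  have e2 : Complex.exp (-(Complex.I * ((2 * t : ℝ) : ℂ))) =
      Complex.exp (-(2 * t * Complex.I)) := by
    congr 1; push_cast; ring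
  simp [Matrix.mul_apply, Fin.sum_univ_two, expZ, e1, e2]
  ring

lemma im_form (c1 c2 c3 : ℂ) (t : ℝ) :
    (c1 * Complex.exp (2 * t * Complex.I) + c2 * Complex.exp (-(2 * t * Complex.I)) + c3).im =
      Real.cos (2 * t) * (c1.im + c2.im) + Real.sin (2 * t) * (c1.re - c2.re) + c3.im := by
  have h1 : (2 * (t : ℂ) * Complex.I) = ((2 * t : ℝ) : ℂ) * Complex.I := by push_cast; ring
  have h2 : -(((2 * t : ℝ) : ℂ) * Complex.I) = ((-(2 * t) : ℝ) : ℂ) * Complex.I := by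
    push_cast; ring
  rw [h1, h2, Complex.add_im, Complex.add_im, Complex.mul_im, Complex.mul_im,
    Complex.exp_ofReal_mul_I_re, Complex.exp_ofReal_mul_I_im, Complex.exp_ofReal_mul_I_re,
    Complex.exp_ofReal_mul_I_im, Real.cos_neg, Real.sin_neg]
  ring

lemma pad_update_pos (Φ : ℕ →₀ ℝ) (k : ℕ) (t : ℝ) (N : ℕ) (hk : 1 ≤ k) (hkN : k + 2 ≤ N) :
    pad (Φ.update k t) N =
      Function.update (Function.update (pad Φ N) (N - 1 - k) t) (N - 1 + k) t := by
  funext j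
  simp only [pad, Function.update_apply, finsuppUpdate_apply]
  split_ifs <;> first | rfl | omega

lemma pad_update_zero (Φ : ℕ →₀ ℝ) (t : ℝ) (N : ℕ) (hN : 2 ≤ N) :
    pad (Φ.update 0 t) N = Function.update (pad Φ N) (N - 1) (2 * t) := by
  funext j
  simp only [pad, Function.update_apply, finsuppUpdate_apply]
  split_ifs <;> first | rfl | omega

lemma key_exists (x : ℝ) (hx : x ∈ Set.Icc (-1 : ℝ) 1) (Φ : ℕ →₀ ℝ) (k : ℕ) :
    ∃ α β γ : ℝ, ∀ t : ℝ,
      gred x (Φ.update k t) = Real.cos (2 * t) * α + Real.sin (2 * t) * β + γ := by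
  set N := max (nOf Φ) (k + 2) with hN
  have hNk : k + 2 ≤ N := le_max_right _ _
  have hNΦ : nOf Φ ≤ N := le_max_left _ _
  have hg : ∀ t, gred x (Φ.update k t) = gfun x (2 * N - 2) (pad (Φ.update k t) N) := by
    intro t
    exact gred_eq x hx _ (le_trans (nOf_update_le Φ k t) (by omega))
  rcases Nat.eq_zero_or_pos k with rfl | hk
  · obtain ⟨A, C, hAC⟩ := Umat_one_slot x (2 * N - 2) (N - 1) (pad Φ N) (by omega) (by omega)
    refine ⟨(A 0 0 * C 0 0).im + (A 0 1 * C 1 0).im,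
      (A 0 0 * C 0 0).re - (A 0 1 * C 1 0).re, 0, ?_⟩
    intro t
    rw [hg t, pad_update_zero Φ t N (by omega)]
    show (Umat x (2 * N - 2) (Function.update (pad Φ N) (N - 1) (2 * t)) 0 0).im = _
    rw [hAC t, entry_form1, im_form]
    simp
  · obtain ⟨A, B, C, hABC⟩ := Umat_two_slot x (2 * N - 2) (N - 1 - k) (N - 1 + k) (pad Φ N)
      (by omega) (by omega) (by omega)
    refine ⟨(A 0 0 * B 0 0 * C 0 0).im + (A 0 1 * B 1 1 * C 1 0).im,
      (A 0 0 * B 0 0 * C 0 0).re - (A 0 1 * B 1 1 * C 1 0).re,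
      (A 0 0 * B 0 1 * C 1 0 + A 0 1 * B 1 0 * C 0 0).im, ?_⟩
    intro t
    rw [hg t, pad_update_pos Φ k t N hk hNk]
    show (Umat x (2 * N - 2)
      (Function.update (Function.update (pad Φ N) (N - 1 - k) t) (N - 1 + k) t) 0 0).im = _
    rw [hABC t, entry_form, im_form]

lemma trig_deriv (α β γ φ : ℝ) :
    deriv (fun t => Real.cos (2 * t) * α + Real.sin (2 * t) * β + γ) φ =
      (Real.cos (2 * (φ + π / 4)) * α + Real.sin (2 * (φ + π / 4)) * β + γ) -
      (Real.cos (2 * (φ - π / 4)) * α + Real.sin (2 * (φ - π / 4)) * β + γ) := by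
  have h2t : HasDerivAt (fun t : ℝ => 2 * t) 2 φ := by
    simpa [mul_comm] using (hasDerivAt_id φ).const_mul (2 : ℝ)
  have hcos : HasDerivAt (fun t => Real.cos (2 * t)) (-Real.sin (2 * φ) * 2) φ :=
    (Real.hasDerivAt_cos (2 * φ)).comp φ h2t
  have hsin : HasDerivAt (fun t => Real.sin (2 * t)) (Real.cos (2 * φ) * 2) φ :=
    (Real.hasDerivAt_sin (2 * φ)).comp φ h2t
  have h := ((hcos.mul_const α).add (hsin.mul_const β)).add_const γ
  have h' : HasDerivAt (fun t => Real.cos (2 * t) * α + Real.sin (2 * t) * β + γ)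
      (-Real.sin (2 * φ) * 2 * α + Real.cos (2 * φ) * 2 * β) φ := h
  rw [h'.deriv]
  have e1 : 2 * (φ + π / 4) = 2 * φ + π / 2 := by ring
  have e2 : 2 * (φ - π / 4) = 2 * φ - π / 2 := by ring
  rw [e1, e2, Real.cos_add_pi_div_two, Real.sin_add_pi_div_two, Real.cos_sub_pi_div_two,
    Real.sin_sub_pi_div_two]
  ring

lemma trig_recover {h : ℝ → ℝ} (α β γ : ℝ)
    (H : ∀ t, h t = Real.cos (2 * t) * α + Real.sin (2 * t) * β + γ) (t : ℝ) :
    h t = Real.cos (2 * t) * ((h 0 - h (π / 2)) / 2) +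
      Real.sin (2 * t) * (h (π / 4) - (h 0 + h (π / 2)) / 2) + (h 0 + h (π / 2)) / 2 := by
  have h0 := H 0
  have h2 := H (π / 2)
  have h4 := H (π / 4)
  rw [show 2 * (π / 2) = π by ring] at h2
  rw [show 2 * (π / 4) = π / 2 by ring] at h4
  simp [Real.cos_pi, Real.sin_pi, Real.cos_pi_div_two, Real.sin_pi_div_two] at h0 h2 h4
  rw [H t, h0, h2, h4]
  ring

lemma cont_Wmat : Continuous fun x => Wmat x := by
  apply continuous_matrix
  intro i j
  fin_cases i <;> fin_cases j <;> simp [Wmat] <;> fun_prop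

lemma cont_Umat (d : ℕ) (Ψ : ℕ → ℝ) : Continuous fun x => Umat x d Ψ := by
  unfold Umat
  apply Continuous.matrix_mul continuous_const
  induction (List.range d) with
  | nil => simpa using continuous_const
  | cons a l ih =>
      simp only [List.map_cons, List.prod_cons]
      exact (cont_Wmat.matrix_mul continuous_const).matrix_mul ih

lemma cont_gred (Φ : ℕ →₀ ℝ) : Continuous fun x => gred x Φ := by
  unfold gred gfun
  exact Complex.continuous_im.comp ((cont_Umat _ _).matrix_elem 0 0)

lemma chebCoeff_eqOn {F G : ℝ → ℝ} (h : ∀ x ∈ Set.Icc (-1 : ℝ) 1, F x = G x) (j : ℕ) :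
    chebCoeff F j = chebCoeff G j := by
  unfold chebCoeff
  congr 1
  apply intervalIntegral.integral_congr
  intro θ _
  simp only []
  rw [h _ ⟨Real.neg_one_le_cos θ, Real.cos_le_one θ⟩]

lemma chebCoeff_comb (p q : ℝ) (f g h : ℝ → ℝ) (hf : Continuous f) (hg : Continuous g)
    (hh : Continuous h) (j : ℕ) :
    chebCoeff (fun x => p * f x + q * g x + h x) j =
      p * chebCoeff f j + q * chebCoeff g j + chebCoeff h j := by
  unfold chebCoeff
  have hc : Continuous fun θ : ℝ => Real.cos (2 * (j : ℝ) * θ) := by fun_prop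
  have hfc : IntervalIntegrable (fun θ => f (Real.cos θ) * Real.cos (2 * j * θ))
      MeasureTheory.volume 0 (2 * π) :=
    (((hf.comp Real.continuous_cos).mul hc)).intervalIntegrable _ _
  have hgc : IntervalIntegrable (fun θ => g (Real.cos θ) * Real.cos (2 * j * θ))
      MeasureTheory.volume 0 (2 * π) :=
    (((hg.comp Real.continuous_cos).mul hc)).intervalIntegrable _ _
  have hhc : IntervalIntegrable (fun θ => h (Real.cos θ) * Real.cos (2 * j * θ))
      MeasureTheory.volume 0 (2 * π) :=
    (((hh.comp Real.continuous_cos).mul hc)).intervalIntegrable _ _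
  have e : (fun θ => (p * f (Real.cos θ) + q * g (Real.cos θ) + h (Real.cos θ)) *
      Real.cos (2 * j * θ)) =
      fun θ => p * (f (Real.cos θ) * Real.cos (2 * j * θ)) +
        (q * (g (Real.cos θ) * Real.cos (2 * j * θ)) +
          h (Real.cos θ) * Real.cos (2 * j * θ)) := by
    funext θ; ring
  rw [e, intervalIntegral.integral_add (hfc.const_mul p) ((hgc.const_mul q).add hhc),
    intervalIntegral.integral_add (hgc.const_mul q) hhc,
    intervalIntegral.integral_const_mul, intervalIntegral.integral_const_mul]
  ring

end AuxDF

/-- `∂F/∂φ_k(Φ) = F(Φ + (π/4)e_k) - F(Φ - (π/4)e_k)`; equivalently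
`∂g(x,Φ)/∂φ_k = g(x, Φ + (π/4)e_k) - g(x, Φ - (π/4)e_k)` for `x ∈ [-1,1]`. -/
theorem DF_column_formula (Φ : ℕ →₀ ℝ) (k : ℕ) :
    (∀ j, FmapPD k Φ j =
      Fmap (Φ + Finsupp.single k (π / 4)) j - Fmap (Φ - Finsupp.single k (π / 4)) j) ∧
    (∀ x ∈ Set.Icc (-1 : ℝ) 1,
      gredPD k x Φ =
        gred x (Φ + Finsupp.single k (π / 4)) - gred x (Φ - Finsupp.single k (π / 4))) := by
  classical
  set a : ℝ → ℝ := fun x => (gred x (Φ.update k 0) - gred x (Φ.update k (π / 2))) / 2 with hA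
  set b : ℝ → ℝ := fun x => gred x (Φ.update k (π / 4)) -
    (gred x (Φ.update k 0) + gred x (Φ.update k (π / 2))) / 2 with hB
  set c : ℝ → ℝ := fun x => (gred x (Φ.update k 0) + gred x (Φ.update k (π / 2))) / 2 with hC
  have habc : ∀ x ∈ Set.Icc (-1 : ℝ) 1, ∀ t : ℝ,
      gred x (Φ.update k t) = Real.cos (2 * t) * a x + Real.sin (2 * t) * b x + c x := by
    intro x hx t
    obtain ⟨α, β, γ, hK⟩ := key_exists x hx Φ k
    exact trig_recover (h := fun t => gred x (Φ.update k t)) α β γ hK t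
  have hconta : Continuous a := ((cont_gred _).sub (cont_gred _)).div_const 2
  have hcontb : Continuous b :=
    (cont_gred _).sub (((cont_gred _).add (cont_gred _)).div_const 2)
  have hcontc : Continuous c := ((cont_gred _).add (cont_gred _)).div_const 2
  constructor
  · intro j
    have hFm : ∀ t : ℝ, Fmap (Φ.update k t) j =
        Real.cos (2 * t) * chebCoeff a j + Real.sin (2 * t) * chebCoeff b j + chebCoeff c j := by
      intro t
      unfold Fmap
      rw [chebCoeff_eqOn (fun x hx => habc x hx t) j]
      exact chebCoeff_comb _ _ a b c hconta hcontb hcontc j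
    unfold FmapPD
    rw [show (fun t => Fmap (Φ.update k t) j) =
        fun t => Real.cos (2 * t) * chebCoeff a j + Real.sin (2 * t) * chebCoeff b j +
          chebCoeff c j from funext hFm,
      trig_deriv, update_eq_add_single, sub_eq_update, hFm (Φ k + π / 4), hFm (Φ k - π / 4)]
  · intro x hx
    unfold gredPD
    rw [show (fun t => gred x (Φ.update k t)) =
        fun t => Real.cos (2 * t) * a x + Real.sin (2 * t) * b x + c x from
        funext (habc x hx),
      trig_deriv, update_eq_add_single, sub_eq_update, habc x hx (Φ k + π / 4),
      habc x hx (Φ k - π / 4)]
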